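/- Let A be a unital complex Banach algebra and a, b, c ∈ A satisfy a(ba)² = abaca = acaba = (ac)²a (Cline-type condition). Then ba has a generalized Drazin inverse if and only if ac has a generalized Drazin inverse, and in that case (ba)^d = b((ac)^d)² a. -/

import Mathlib

def IsQuasinilpotent {A : Type*} [Ring A] (q : A) : Prop :=
  ∀ y : A, q * y = y * q → IsUnit (1 + q * y)

def IsGDrazinInverse {A : Type*} [Ring A] (a x : A) : Prop :=
  x = x * a * x ∧ a * x = x * a ∧ IsQuasinilpotent (a - a * a * x)

open Filter ENNReal in
lemma qnil_spectrum {A : Type*} [NormedRing A] [NormedAlgebra ℂ A] (Q : A)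
    (h : IsQuasinilpotent Q) : ∀ z ∈ spectrum ℂ Q, z = 0 := by
  intro z hz
  by_contra hz0
  have hcomm : Q * (algebraMap ℂ A (-z⁻¹)) = (algebraMap ℂ A (-z⁻¹)) * Q :=
    (Algebra.commutes (-z⁻¹) Q).symm
  have hu := h _ hcomm
  have hfac : algebraMap ℂ A z - Q = (1 + Q * algebraMap ℂ A (-z⁻¹)) * algebraMap ℂ A z := by
    rw [add_mul, one_mul, mul_assoc, ← map_mul]
    rw [show (-z⁻¹) * z = -1 by field_simp]
    rw [map_neg, map_one, mul_neg, mul_one]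
    exact (sub_eq_add_neg _ _)
  have : IsUnit (algebraMap ℂ A z - Q) := by
    rw [hfac]; exact hu.mul ((isUnit_iff_ne_zero.mpr hz0).map (algebraMap ℂ A))
  exact (spectrum.mem_iff.mp hz) this

open Filter ENNReal NNReal Topology in
lemma aux_isUnit_one_add {A : Type*} [NormedRing A] [NormedAlgebra ℂ A] [CompleteSpace A]
    (q T : A) (hσ : ∀ z ∈ spectrum ℂ q, z = 0) (C K : ℝ≥0)
    (hb : ∀ n : ℕ, ‖T ^ (n + 1)‖₊ ≤ C * K ^ (n + 1) * (‖q ^ (n + 1)‖₊ * ‖q ^ (n + 1)‖₊)) :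
    IsUnit (1 + T) := by
  -- spectral radius of q is 0
  have hrq : spectralRadius ℂ q = 0 := by
    refine le_antisymm ?_ zero_le
    refine iSup₂_le fun k hk => ?_
    simp [hσ k hk]
  have hG := spectrum.pow_nnnorm_pow_one_div_tendsto_nhds_spectralRadius q
  rw [hrq] at hG
  have hg : Tendsto (fun n : ℕ => (‖q ^ (n+1)‖₊ : ℝ≥0∞) ^ (1/((n:ℝ)+1))) atTop (𝓝 0) := by
    have h2 := hG.comp (tendsto_add_atTop_nat 1)
    have : ((fun n : ℕ => (‖q ^ n‖₊ : ℝ≥0∞) ^ (1/(n:ℝ))) ∘ (fun n => n + 1))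
        = fun n : ℕ => (‖q ^ (n+1)‖₊ : ℝ≥0∞) ^ (1/((n:ℝ)+1)) := by
      funext n; simp [Function.comp, Nat.cast_add_one]
    rwa [this] at h2
  set D : ℝ≥0 := (1 ⊔ C) * K * (1 ⊔ ‖(1 : A)‖₊) with hD
  have key : ∀ n : ℕ, spectralRadius ℂ T ≤
      (D : ℝ≥0∞) * ((‖q ^ (n+1)‖₊ : ℝ≥0∞) ^ (1/((n:ℝ)+1)) * (‖q ^ (n+1)‖₊ : ℝ≥0∞) ^ (1/((n:ℝ)+1))) := by
    intro n
    have hmain := spectrum.spectralRadius_le_pow_nnnorm_pow_one_div ℂ T n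
    refine hmain.trans ?_
    have hexp0 : (0:ℝ) ≤ 1/((n:ℝ)+1) := by positivity
    have hexp1 : (1/((n:ℝ)+1)) ≤ 1 := by
      rw [div_le_one (by positivity)]; linarith [Nat.cast_nonneg (α := ℝ) n]
    -- NNReal side computation
    set N : ℝ≥0 := ‖q ^ (n+1)‖₊ with hN
    have s1 : ‖T ^ (n+1)‖₊ ^ (1/((n:ℝ)+1)) ≤ ((1 ⊔ C) * K) * (N ^ (1/((n:ℝ)+1)) * N ^ (1/((n:ℝ)+1))) := by
      calc ‖T ^ (n+1)‖₊ ^ (1/((n:ℝ)+1))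
          ≤ (C * K ^ (n+1) * (N * N)) ^ (1/((n:ℝ)+1)) :=
            NNReal.rpow_le_rpow (hb n) hexp0
        _ = C ^ (1/((n:ℝ)+1)) * (K ^ (n+1) : ℝ≥0) ^ (1/((n:ℝ)+1)) *
              (N ^ (1/((n:ℝ)+1)) * N ^ (1/((n:ℝ)+1))) := by
            rw [NNReal.mul_rpow, NNReal.mul_rpow, NNReal.mul_rpow]
        _ = C ^ (1/((n:ℝ)+1)) * K * (N ^ (1/((n:ℝ)+1)) * N ^ (1/((n:ℝ)+1))) := by
            congr 2
            rw [← NNReal.rpow_natCast K (n+1), ← NNReal.rpow_mul]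
            rw [show ((n+1 : ℕ) : ℝ) * (1/((n:ℝ)+1)) = 1 by push_cast; field_simp]
            exact NNReal.rpow_one K
        _ ≤ (1 ⊔ C) * K * (N ^ (1/((n:ℝ)+1)) * N ^ (1/((n:ℝ)+1))) := by
            gcongr
            calc C ^ (1/((n:ℝ)+1)) ≤ (1 ⊔ C) ^ (1/((n:ℝ)+1)) :=
                  NNReal.rpow_le_rpow le_sup_right hexp0
              _ ≤ (1 ⊔ C) ^ (1:ℝ) := NNReal.rpow_le_rpow_of_exponent_le le_sup_left hexp1
              _ = 1 ⊔ C := NNReal.rpow_one _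
    have s2 : (‖(1:A)‖₊ : ℝ≥0) ^ (1/((n:ℝ)+1)) ≤ 1 ⊔ ‖(1:A)‖₊ := by
      calc ‖(1:A)‖₊ ^ (1/((n:ℝ)+1)) ≤ (1 ⊔ ‖(1:A)‖₊) ^ (1/((n:ℝ)+1)) :=
            NNReal.rpow_le_rpow le_sup_right hexp0
        _ ≤ (1 ⊔ ‖(1:A)‖₊) ^ (1:ℝ) := NNReal.rpow_le_rpow_of_exponent_le le_sup_left hexp1
        _ = _ := NNReal.rpow_one _
    have hcast : ∀ (u : ℝ≥0) (r : ℝ), 0 ≤ r → ((u ^ r : ℝ≥0) : ℝ≥0∞) = (u : ℝ≥0∞) ^ r :=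
      fun u r hr => ENNReal.coe_rpow_of_nonneg u hr
    calc (‖T ^ (n + 1)‖₊ : ℝ≥0∞) ^ (1 / (n + 1) : ℝ) * (‖(1 : A)‖₊ : ℝ≥0∞) ^ (1 / (n + 1) : ℝ)
        = ((‖T ^ (n+1)‖₊ ^ (1/((n:ℝ)+1)) : ℝ≥0) : ℝ≥0∞) *
          ((‖(1:A)‖₊ ^ (1/((n:ℝ)+1)) : ℝ≥0) : ℝ≥0∞) := by
          rw [hcast _ _ hexp0, hcast _ _ hexp0]
      _ ≤ ((((1 ⊔ C) * K) * (N ^ (1/((n:ℝ)+1)) * N ^ (1/((n:ℝ)+1))) : ℝ≥0) : ℝ≥0∞) *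
          (((1 ⊔ ‖(1:A)‖₊ : ℝ≥0)) : ℝ≥0∞) :=
          mul_le_mul' (ENNReal.coe_le_coe.mpr s1) (ENNReal.coe_le_coe.mpr s2)
      _ = ((D * (N ^ (1/((n:ℝ)+1)) * N ^ (1/((n:ℝ)+1))) : ℝ≥0) : ℝ≥0∞) := by
          rw [← ENNReal.coe_mul]
          congr 1
          rw [hD]; ring
      _ = (D : ℝ≥0∞) * ((N : ℝ≥0∞) ^ (1/((n:ℝ)+1)) * (N : ℝ≥0∞) ^ (1/((n:ℝ)+1))) := by
          simp only [ENNReal.coe_mul, hcast _ _ hexp0]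
  have hlim : Tendsto (fun n : ℕ => (D : ℝ≥0∞) *
      ((‖q ^ (n+1)‖₊ : ℝ≥0∞) ^ (1/((n:ℝ)+1)) * (‖q ^ (n+1)‖₊ : ℝ≥0∞) ^ (1/((n:ℝ)+1))))
      atTop (𝓝 0) := by
    have hmul : Tendsto (fun n : ℕ =>
        (‖q ^ (n+1)‖₊ : ℝ≥0∞) ^ (1/((n:ℝ)+1)) * (‖q ^ (n+1)‖₊ : ℝ≥0∞) ^ (1/((n:ℝ)+1)))
        atTop (𝓝 0) := by
      have := ENNReal.Tendsto.mul (a := 0) (b := 0) hg (Or.inr zero_ne_top) hg (Or.inr zero_ne_top)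
      simpa using this
    have := ENNReal.Tendsto.const_mul (a := (D : ℝ≥0∞)) hmul (Or.inr ENNReal.coe_ne_top)
    simpa using this
  have hrT : spectralRadius ℂ T = 0 :=
    le_antisymm (ge_of_tendsto' hlim key) zero_le
  have hmem : (-1 : ℂ) ∉ spectrum ℂ T := by
    intro hmem
    have h1 : (1:ℝ≥0∞) ≤ spectralRadius ℂ T := by
      have := le_iSup₂ (f := fun k (_ : k ∈ spectrum ℂ T) => (‖k‖₊ : ℝ≥0∞)) (-1) hmem
      simpa [spectralRadius] using this
    rw [hrT] at h1
    simp at h1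
  have hUnit := spectrum.notMem_iff.mp hmem
  have h2 : algebraMap ℂ A (-1) - T = -(1 + T) := by
    rw [map_neg, map_one]; abel
  rw [h2] at hUnit
  simpa using hUnit.neg

lemma cline_aux {A : Type*} [NormedRing A] [NormedAlgebra ℂ A] [CompleteSpace A]
    (a b c x : A)
    (h1 : a * b * a * b * a = a * b * a * c * a)
    (h2 : a * b * a * c * a = a * c * a * b * a)
    (h3 : a * c * a * b * a = a * c * a * c * a)
    (hx : IsGDrazinInverse (a * c) x) :
    IsGDrazinInverse (b * a) (b * (x * x) * a) := by
  obtain ⟨hx1, hx2, hx3⟩ := hx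
  -- basic facts about x
  have base : a * c * (x * x) = x := by
    calc a * c * (x * x) = (a * c * x) * x := (mul_assoc (a * c) x x).symm
      _ = x * (a * c) * x := by rw [hx2]
      _ = x := hx1.symm
  have F1 : ∀ z : A, a * (c * (x * (x * z))) = x * z := by
    intro z
    have := congrArg (· * z) base
    simpa [mul_assoc] using this
  have F1b : a * (c * (x * x)) = x := by rw [← mul_assoc]; exact base
  have X1 : ∀ z : A, x * (a * (c * z)) = a * (c * (x * z)) := by
    intro z
    have := congrArg (· * z) hx2
    simpa [mul_assoc] using this.symm
  have X1b : x * (a * c) = a * (c * x) := by simpa [mul_assoc] using hx2.symm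
  have R2 : ∀ z : A, x * (x * (a * (c * z))) = x * z := by
    intro z; rw [X1, X1, F1]
  have XX : ∀ z : A, x * (x * z) = a * (c * (a * (c * (x * (x * (x * (x * z))))))) := by
    intro z; rw [F1, F1]
  -- extended hypothesis rules
  have k1 : a * b * a * c * a = a * c * a * c * a := h2.trans h3
  have k0 : a * b * a * b * a = a * c * a * c * a := h1.trans k1
  have E1 : ∀ z : A, a * (b * (a * (b * (a * z)))) = a * (c * (a * (c * (a * z)))) := by
    intro z; have := congrArg (· * z) k0; simpa [mul_assoc] using this
  have E2 : ∀ z : A, a * (b * (a * (c * (a * z)))) = a * (c * (a * (c * (a * z)))) := by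
    intro z; have := congrArg (· * z) k1; simpa [mul_assoc] using this
  have E3 : ∀ z : A, a * (c * (a * (b * (a * z)))) = a * (c * (a * (c * (a * z)))) := by
    intro z; have := congrArg (· * z) h3; simpa [mul_assoc] using this
  have E1b : a * (b * (a * (b * a))) = a * (c * (a * (c * a))) := by simpa [mul_assoc] using k0
  have E3b : a * (c * (a * (b * a))) = a * (c * (a * (c * a))) := by simpa [mul_assoc] using h3
  -- word identities
  have G1 : b * (x * (x * (a * (b * (a * (b * (x * (x * a)))))))) = b * (x * (x * a)) := by
    conv_lhs => rw [XX a, E1 (c * (a * (c * (x * (x * (x * (x * a))))))),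
      F1 (x * (x * a)), F1 (x * a), F1 a, R2 (x * a)]
  have G2a : b * (a * (b * (x * (x * a)))) = b * (x * a) := by
    conv_lhs => rw [XX a, E2 (c * (x * (x * (x * (x * a))))),
      F1 (x * (x * a)), F1 (x * a), F1 a]
  have G2b : b * (x * (x * (a * (b * a)))) = b * (x * a) := by
    conv_lhs => rw [← R2 (a * (b * a)), E3b, R2 (a * (c * a)), R2 a]
  have A1 : b * (a * (b * (a * (b * (x * (x * a)))))) = b * (a * (c * (x * a))) := by
    conv_lhs => rw [XX a, E1 (c * (a * (c * (x * (x * (x * (x * a))))))),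
      F1 (x * (x * a)), F1 (x * a), F1 a]
  have huv : b * (a * (b * (a * (c * (x * a))))) = b * (a * (c * (a * (c * (x * a))))) := by
    conv_lhs => rw [← F1 a, E2 (c * (x * (x * a))), F1 a]
  have hvu : b * (a * (c * (x * (a * (b * a))))) = b * (a * (c * (a * (c * (x * a))))) := by
    conv_lhs => rw [← R2 (a * (b * a)), E3b, R2 (a * (c * a)), X1 a]
  have hvv : b * (a * (c * (x * (a * (b * (a * (c * (x * a)))))))) =
      b * (a * (c * (a * (c * (x * a))))) := by
    conv_lhs => rw [← R2 (a * (b * (a * (c * (x * a))))), E3 (c * (x * a)),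
      R2 (a * (c * (a * (c * (x * a))))), X1 (a * (c * (x * a))), X1 (x * a), F1 a]
  have hu3 : b * (a * (b * (a * (b * a)))) = b * (a * (c * (a * (c * a)))) := by
    conv_lhs => rw [E1b]
  have hu2v : b * (a * (b * (a * (b * (a * (c * (x * a))))))) =
      b * (a * (c * (a * (c * (a * (c * (x * a))))))) := by
    conv_lhs => rw [E1 (c * (x * a))]
  have hw2u : b * (a * (c * (a * (c * (x * (a * (b * a))))))) =
      b * (a * (c * (a * (c * (a * (c * (x * a))))))) := by
    conv_lhs => rw [← R2 (a * (b * a)), E3b, R2 (a * (c * a)), X1 a]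
  have hw2v : b * (a * (c * (a * (c * (x * (a * (b * (a * (c * (x * a)))))))))) =
      b * (a * (c * (a * (c * (a * (c * (x * a))))))) := by
    conv_lhs => rw [← R2 (a * (b * (a * (c * (x * a))))), E3 (c * (x * a)),
      R2 (a * (c * (a * (c * (x * a))))), X1 (a * (c * (x * a))), X1 (x * a), F1 a]
  -- assemble the three conditions
  refine ⟨?_, ?_, ?_⟩
  · -- w = w * (b*a) * w
    simp only [mul_assoc]
    exact G1.symm
  · -- (b*a) * w = w * (b*a)
    simp only [mul_assoc]
    exact G2a.trans G2b.symm
  · -- quasinilpotent part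
    have hA1' : b * a * (b * a) * (b * (x * x) * a) = b * (a * (c * (x * a))) := by
      simp only [mul_assoc]; exact A1
    rw [hA1']
    have hUV : (b * a) * (b * (a * (c * (x * a)))) = b * (a * (c * (a * (c * (x * a))))) := by
      simp only [mul_assoc]; exact huv
    have hVU : (b * (a * (c * (x * a)))) * (b * a) = b * (a * (c * (a * (c * (x * a))))) := by
      simp only [mul_assoc]; exact hvu
    have hVV : (b * (a * (c * (x * a)))) * (b * (a * (c * (x * a)))) =
        b * (a * (c * (a * (c * (x * a))))) := by
      simp only [mul_assoc]; exact hvv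
    have hp2 : (b * a - b * (a * (c * (x * a)))) * (b * a - b * (a * (c * (x * a)))) =
        (b * a) * (b * a) - b * (a * (c * (a * (c * (x * a))))) := by
      have expand : (b * a - b * (a * (c * (x * a)))) * (b * a - b * (a * (c * (x * a)))) =
          (b * a) * (b * a) - (b * a) * (b * (a * (c * (x * a))))
            - (b * (a * (c * (x * a)))) * (b * a)
            + (b * (a * (c * (x * a)))) * (b * (a * (c * (x * a)))) := by noncomm_ring
      rw [expand, hUV, hVU, hVV]; abel
    have hU3 : (b * a) * (b * a) * (b * a) = b * (a * (c * (a * (c * a)))) := by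
      simp only [mul_assoc]; exact hu3
    have hU2V : (b * a) * (b * a) * (b * (a * (c * (x * a)))) =
        b * (a * (c * (a * (c * (a * (c * (x * a))))))) := by
      simp only [mul_assoc]; exact hu2v
    have hWU : (b * (a * (c * (a * (c * (x * a)))))) * (b * a) =
        b * (a * (c * (a * (c * (a * (c * (x * a))))))) := by
      simp only [mul_assoc]; exact hw2u
    have hWV : (b * (a * (c * (a * (c * (x * a)))))) * (b * (a * (c * (x * a)))) =
        b * (a * (c * (a * (c * (a * (c * (x * a))))))) := by
      simp only [mul_assoc]; exact hw2v
    have hp3 : (b * a - b * (a * (c * (x * a)))) * (b * a - b * (a * (c * (x * a)))) *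
        (b * a - b * (a * (c * (x * a)))) =
        b * (a * (c * (a * (c * a)))) - b * (a * (c * (a * (c * (a * (c * (x * a))))))) := by
      rw [hp2]
      have expand : ((b * a) * (b * a) - b * (a * (c * (a * (c * (x * a)))))) *
          (b * a - b * (a * (c * (x * a)))) =
          (b * a) * (b * a) * (b * a) - (b * a) * (b * a) * (b * (a * (c * (x * a))))
            - (b * (a * (c * (a * (c * (x * a)))))) * (b * a)
            + (b * (a * (c * (a * (c * (x * a)))))) * (b * (a * (c * (x * a)))) := by noncomm_ring
      rw [expand, hU3, hU2V, hWU, hWV]; abel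
    -- the quasinilpotent element q
    have hQc2 : (a * c * (a * c) * x) * (a * c) = a * c * ((a * c) * ((a * c) * x)) := by
      simp only [mul_assoc]
      rw [X1b]
    have hQc3 : (a * c * (a * c) * x) * (a * c * (a * c) * x) =
        a * c * ((a * c) * ((a * c) * x)) := by
      simp only [mul_assoc]
      rw [X1 (a * (c * x)), X1 x, F1b]
    have hq2 : (a * c - a * c * (a * c) * x) * (a * c - a * c * (a * c) * x) =
        (a * c) * (a * c) - a * c * ((a * c) * ((a * c) * x)) := by
      have expand : (a * c - a * c * (a * c) * x) * (a * c - a * c * (a * c) * x) =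
          (a * c) * (a * c) - (a * c) * (a * c * (a * c) * x) - (a * c * (a * c) * x) * (a * c)
            + (a * c * (a * c) * x) * (a * c * (a * c) * x) := by noncomm_ring
      have e1 : (a * c) * (a * c * (a * c) * x) = a * c * ((a * c) * ((a * c) * x)) := by
        simp only [mul_assoc]
      rw [expand, e1, hQc2, hQc3]; abel
    have hbqa : b * ((a * c - a * c * (a * c) * x) * (a * c - a * c * (a * c) * x)) * a =
        b * (a * (c * (a * (c * a)))) - b * (a * (c * (a * (c * (a * (c * (x * a))))))) := by
      rw [hq2]; simp only [mul_sub, sub_mul, mul_assoc]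
    have hp3Q : (b * a - b * (a * (c * (x * a)))) * (b * a - b * (a * (c * (x * a)))) *
        (b * a - b * (a * (c * (x * a)))) =
        b * ((a * c - a * c * (a * c) * x) * (a * c - a * c * (a * c) * x)) * a :=
      hp3.trans hbqa.symm
    -- commutation facts
    have hcEx : Commute (a * c) x := hx2
    have hcEQ : Commute (a * c) (a * c - a * c * (a * c) * x) :=
      (Commute.refl (a * c)).sub_right
        (((Commute.refl (a * c)).mul_right (Commute.refl (a * c))).mul_right hcEx)
    have hcEQQ : Commute (a * c)
        ((a * c - a * c * (a * c) * x) * (a * c - a * c * (a * c) * x)) :=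
      hcEQ.mul_right hcEQ
    -- the key multiplication rule
    have A3l : (a * b) * ((a * c - a * c * (a * c) * x) * (a * c - a * c * (a * c) * x)) =
        (a * c) * ((a * c - a * c * (a * c) * x) * (a * c - a * c * (a * c) * x)) := by
      rw [hq2]
      simp only [mul_sub, mul_assoc]
      rw [E2 c, E2 (c * (a * (c * x)))]
    have A3a : a * (b * ((a * c - a * c * (a * c) * x) * ((a * c - a * c * (a * c) * x) * a))) =
        a * (c * ((a * c - a * c * (a * c) * x) * ((a * c - a * c * (a * c) * x) * a))) := by
      have := congrArg (· * a) A3l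
      simpa [mul_assoc] using this
    -- power identity for M = b * (Q*Q) * a
    have hMn : ∀ n : ℕ,
        (b * ((a * c - a * c * (a * c) * x) * (a * c - a * c * (a * c) * x)) * a) ^ (n + 1) =
        b * ((a * c) ^ n *
          ((a * c - a * c * (a * c) * x) * (a * c - a * c * (a * c) * x)) ^ (n + 1)) * a := by
      intro n
      induction n with
      | zero => simp
      | succ n ih =>
        have key0 : (a * c) ^ n *
            ((a * c - a * c * (a * c) * x) * (a * c - a * c * (a * c) * x)) ^ (n + 1) *
            ((a * c) * ((a * c - a * c * (a * c) * x) * (a * c - a * c * (a * c) * x))) =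
            (a * c) ^ (n + 1) *
            ((a * c - a * c * (a * c) * x) * (a * c - a * c * (a * c) * x)) ^ (n + 2) := by
          rw [pow_succ (a * c) n,
            pow_succ ((a * c - a * c * (a * c) * x) * (a * c - a * c * (a * c) * x)) (n + 1)]
          exact (hcEQQ.symm.pow_left (n + 1)).mul_mul_mul_comm ((a * c) ^ n) _
        have key : (a * c) ^ n *
            (((a * c - a * c * (a * c) * x) * (a * c - a * c * (a * c) * x)) ^ (n + 1) *
              (a * (c * ((a * c - a * c * (a * c) * x) * ((a * c - a * c * (a * c) * x) * a))))) =
            (a * c) ^ (n + 1) *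
            (((a * c - a * c * (a * c) * x) * (a * c - a * c * (a * c) * x)) ^ (n + 2) * a) := by
          have := congrArg (· * a) key0
          simpa [mul_assoc] using this
        calc (b * ((a * c - a * c * (a * c) * x) * (a * c - a * c * (a * c) * x)) * a) ^ (n + 1 + 1)
            = (b * ((a * c - a * c * (a * c) * x) * (a * c - a * c * (a * c) * x)) * a) ^ (n + 1) *
              (b * ((a * c - a * c * (a * c) * x) * (a * c - a * c * (a * c) * x)) * a) :=
              pow_succ _ _
          _ = (b * ((a * c) ^ n *
                ((a * c - a * c * (a * c) * x) * (a * c - a * c * (a * c) * x)) ^ (n + 1)) * a) *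
              (b * ((a * c - a * c * (a * c) * x) * (a * c - a * c * (a * c) * x)) * a) := by
              rw [ih]
          _ = b * ((a * c) ^ n *
                (((a * c - a * c * (a * c) * x) * (a * c - a * c * (a * c) * x)) ^ (n + 1) *
                  (a * (b * ((a * c - a * c * (a * c) * x) *
                    ((a * c - a * c * (a * c) * x) * a)))))) := by
              simp only [mul_assoc]
          _ = b * ((a * c) ^ n *
                (((a * c - a * c * (a * c) * x) * (a * c - a * c * (a * c) * x)) ^ (n + 1) *
                  (a * (c * ((a * c - a * c * (a * c) * x) *
                    ((a * c - a * c * (a * c) * x) * a)))))) := by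
              rw [A3a]
          _ = b * ((a * c) ^ (n + 1) *
                (((a * c - a * c * (a * c) * x) * (a * c - a * c * (a * c) * x)) ^ (n + 2) * a)) := by
              rw [key]
          _ = b * ((a * c) ^ (n + 1) *
                ((a * c - a * c * (a * c) * x) * (a * c - a * c * (a * c) * x)) ^ (n + 1 + 1)) * a := by
              simp only [mul_assoc]
    -- now prove quasinilpotency
    intro y hy
    have hcPy : Commute (b * a - b * (a * (c * (x * a)))) y := hy
    have hP3 : (b * a - b * (a * (c * (x * a)))) ^ 3 =
        b * ((a * c - a * c * (a * c) * x) * (a * c - a * c * (a * c) * x)) * a := by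
      rw [pow_succ, pow_two]
      exact hp3Q
    have hcMY : Commute
        (b * ((a * c - a * c * (a * c) * x) * (a * c - a * c * (a * c) * x)) * a) (y ^ 3) := by
      have := hcPy.pow_pow 3 3
      rwa [hP3] at this
    have hσ := qnil_spectrum _ hx3
    have hpow1 : ∀ n : ℕ, ‖(a * c) ^ n‖₊ ≤ (1 ⊔ ‖(1 : A)‖₊) * (1 ⊔ ‖a * c‖₊) ^ n := by
      intro n
      induction n with
      | zero => simpa using (le_sup_right : ‖(1 : A)‖₊ ≤ 1 ⊔ ‖(1 : A)‖₊)
      | succ n ih =>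
        rw [pow_succ, pow_succ]
        calc ‖(a * c) ^ n * (a * c)‖₊ ≤ ‖(a * c) ^ n‖₊ * ‖a * c‖₊ := nnnorm_mul_le _ _
          _ ≤ ((1 ⊔ ‖(1 : A)‖₊) * (1 ⊔ ‖a * c‖₊) ^ n) * (1 ⊔ ‖a * c‖₊) :=
            mul_le_mul' ih le_sup_right
          _ = (1 ⊔ ‖(1 : A)‖₊) * ((1 ⊔ ‖a * c‖₊) ^ n * (1 ⊔ ‖a * c‖₊)) := by ring
    have hbnd : ∀ n : ℕ,
        ‖(b * ((a * c - a * c * (a * c) * x) * (a * c - a * c * (a * c) * x)) * a * y ^ 3) ^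
            (n + 1)‖₊ ≤
        (‖b‖₊ * ‖a‖₊ * (1 ⊔ ‖(1 : A)‖₊)) * ((1 ⊔ ‖a * c‖₊) * ‖y ^ 3‖₊) ^ (n + 1) *
          (‖(a * c - a * c * (a * c) * x) ^ (n + 1)‖₊ *
            ‖(a * c - a * c * (a * c) * x) ^ (n + 1)‖₊) := by
      intro n
      have e1 : (b * ((a * c - a * c * (a * c) * x) * (a * c - a * c * (a * c) * x)) * a *
            y ^ 3) ^ (n + 1) =
          (b * ((a * c - a * c * (a * c) * x) * (a * c - a * c * (a * c) * x)) * a) ^ (n + 1) *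
            (y ^ 3) ^ (n + 1) := hcMY.mul_pow (n + 1)
      have e2 : ((a * c - a * c * (a * c) * x) * (a * c - a * c * (a * c) * x)) ^ (n + 1) =
          (a * c - a * c * (a * c) * x) ^ (n + 1) * (a * c - a * c * (a * c) * x) ^ (n + 1) :=
        (Commute.refl _).mul_pow (n + 1)
      calc ‖(b * ((a * c - a * c * (a * c) * x) * (a * c - a * c * (a * c) * x)) * a *
            y ^ 3) ^ (n + 1)‖₊
          = ‖(b * ((a * c) ^ n *
              ((a * c - a * c * (a * c) * x) * (a * c - a * c * (a * c) * x)) ^ (n + 1)) * a) *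
              (y ^ 3) ^ (n + 1)‖₊ := by rw [e1, hMn n]
        _ ≤ (‖b‖₊ * ‖(a * c) ^ n *
              ((a * c - a * c * (a * c) * x) * (a * c - a * c * (a * c) * x)) ^ (n + 1)‖₊ *
              ‖a‖₊) * ‖y ^ 3‖₊ ^ (n + 1) := by
            refine (nnnorm_mul_le _ _).trans (mul_le_mul' ?_ (nnnorm_pow_le' _ (Nat.succ_pos n)))
            exact (nnnorm_mul_le _ _).trans (mul_le_mul_left (nnnorm_mul_le _ _) _)
        _ ≤ (‖b‖₊ * (‖(a * c) ^ n‖₊ *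
              (‖(a * c - a * c * (a * c) * x) ^ (n + 1)‖₊ *
                ‖(a * c - a * c * (a * c) * x) ^ (n + 1)‖₊)) *
              ‖a‖₊) * ‖y ^ 3‖₊ ^ (n + 1) := by
            refine mul_le_mul_left (mul_le_mul_left (mul_le_mul_right ?_ _) _) _
            refine (nnnorm_mul_le _ _).trans (mul_le_mul_right ?_ _)
            rw [e2]
            exact nnnorm_mul_le _ _
        _ ≤ (‖b‖₊ * (((1 ⊔ ‖(1 : A)‖₊) * (1 ⊔ ‖a * c‖₊) ^ n) *
              (‖(a * c - a * c * (a * c) * x) ^ (n + 1)‖₊ *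
                ‖(a * c - a * c * (a * c) * x) ^ (n + 1)‖₊)) *
              ‖a‖₊) * ‖y ^ 3‖₊ ^ (n + 1) := by
            refine mul_le_mul_left (mul_le_mul_left (mul_le_mul_right ?_ _) _) _
            exact mul_le_mul_left (hpow1 n) _
        _ ≤ (‖b‖₊ * (((1 ⊔ ‖(1 : A)‖₊) * (1 ⊔ ‖a * c‖₊) ^ (n + 1)) *
              (‖(a * c - a * c * (a * c) * x) ^ (n + 1)‖₊ *
                ‖(a * c - a * c * (a * c) * x) ^ (n + 1)‖₊)) *
              ‖a‖₊) * ‖y ^ 3‖₊ ^ (n + 1) := by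
            refine mul_le_mul_left (mul_le_mul_left (mul_le_mul_right ?_ _) _) _
            exact mul_le_mul_left (mul_le_mul_right
              (pow_le_pow_right' le_sup_left (Nat.le_succ n)) _) _
        _ = (‖b‖₊ * ‖a‖₊ * (1 ⊔ ‖(1 : A)‖₊)) * ((1 ⊔ ‖a * c‖₊) * ‖y ^ 3‖₊) ^ (n + 1) *
              (‖(a * c - a * c * (a * c) * x) ^ (n + 1)‖₊ *
                ‖(a * c - a * c * (a * c) * x) ^ (n + 1)‖₊) := by
            rw [mul_pow]; ring
    have hUnitT := aux_isUnit_one_add (a * c - a * c * (a * c) * x)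
        (b * ((a * c - a * c * (a * c) * x) * (a * c - a * c * (a * c) * x)) * a * y ^ 3)
        hσ _ _ hbnd
    have hT : (((b * a - b * (a * (c * (x * a)))) * y) ^ 3) =
        b * ((a * c - a * c * (a * c) * x) * (a * c - a * c * (a * c) * x)) * a * y ^ 3 := by
      rw [hcPy.mul_pow, hP3]
    rw [← hT] at hUnitT
    obtain ⟨U, hU⟩ := hUnitT
    set t := (b * a - b * (a * (c * (x * a)))) * y with ht
    have fac1 : (1 + t) * (1 - t + t * t) = 1 + t ^ 3 := by noncomm_ring
    have fac2 : (1 - t + t * t) * (1 + t) = 1 + t ^ 3 := by noncomm_ring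
    have hcU : Commute (1 + t) (U : A) := by
      show (1 + t) * (U : A) = (U : A) * (1 + t)
      rw [hU]; noncomm_ring
    rw [← hU] at fac1 fac2
    refine isUnit_iff_exists.mpr ⟨(1 - t + t * t) * ↑U⁻¹, ?_, ?_⟩
    · rw [← mul_assoc, fac1, Units.mul_inv]
    · rw [mul_assoc, ← (hcU.units_inv_right).eq, ← mul_assoc, fac2, Units.mul_inv]

theorem generalized_cline_formula {A : Type*} [NormedRing A] [NormedAlgebra ℂ A]
    [CompleteSpace A] (a b c : A)
    (h1 : a * b * a * b * a = a * b * a * c * a)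
    (h2 : a * b * a * c * a = a * c * a * b * a)
    (h3 : a * c * a * b * a = a * c * a * c * a) :
    ((∃ x : A, IsGDrazinInverse (b * a) x) ↔ (∃ x : A, IsGDrazinInverse (a * c) x)) ∧
      (∀ x : A, IsGDrazinInverse (a * c) x →
        IsGDrazinInverse (b * a) (b * (x * x) * a)) := by
  constructor
  · constructor
    · rintro ⟨x, hx⟩
      exact ⟨_, cline_aux c a a _ rfl rfl rfl (cline_aux a c b _ h3.symm h2.symm h1.symm
        (cline_aux b a a _ rfl rfl rfl hx))⟩
    · rintro ⟨x, hx⟩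
      exact ⟨_, cline_aux a b c x h1 h2 h3 hx⟩
  · intro x hx
    exact cline_aux a b c x h1 h2 h3 hx
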